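/- In 4-dimensional Minkowski spacetime ds² = −dt² + dx² + dy² + dz², for each pair of constants t₀ ∈ ℝ, x₀ ∈ ℝ, the surface S defined by x = x₀ and e^{t₀ − t} = cosh z (parametrized by (y,z)) is a spacelike surface whose mean curvature vector is future-pointing timelike everywhere, i.e. S is a future-trapped (non-compact) surface. -/

import Mathlib

noncomputable section

/-- Minkowski inner product on ℝ^{1,3}, signature (−,+,+,+). -/
def mink (u w : Fin 4 → ℝ) : ℝ := -(u 0 * w 0) + u 1 * w 1 + u 2 * w 2 + u 3 * w 3

/-- The surface x = x₀, e^{t₀−t} = cosh z, parametrized by (y,z). -/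
def Φemb (t₀ x₀ : ℝ) (y z : ℝ) : Fin 4 → ℝ :=
  ![t₀ - Real.log (Real.cosh z), x₀, y, z]

/-- Tangent vector ∂_y Φ. -/
def ey (t₀ x₀ y z : ℝ) : Fin 4 → ℝ := fun i => deriv (fun s => Φemb t₀ x₀ s z i) y
/-- Tangent vector ∂_z Φ. -/
def ez (t₀ x₀ y z : ℝ) : Fin 4 → ℝ := fun i => deriv (fun s => Φemb t₀ x₀ y s i) z
/-- Second partial derivatives of the embedding. -/
def dyy (t₀ x₀ y z : ℝ) : Fin 4 → ℝ := fun i => deriv (fun s => ey t₀ x₀ s z i) y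
def dyz (t₀ x₀ y z : ℝ) : Fin 4 → ℝ := fun i => deriv (fun s => ey t₀ x₀ y s i) z
def dzy (t₀ x₀ y z : ℝ) : Fin 4 → ℝ := fun i => deriv (fun s => ez t₀ x₀ s z i) y
def dzz (t₀ x₀ y z : ℝ) : Fin 4 → ℝ := fun i => deriv (fun s => ez t₀ x₀ y s i) z

/-- Induced metric γ_{AB}. -/
def indMetric (t₀ x₀ y z : ℝ) : Matrix (Fin 2) (Fin 2) ℝ :=
  !![mink (ey t₀ x₀ y z) (ey t₀ x₀ y z), mink (ey t₀ x₀ y z) (ez t₀ x₀ y z);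
     mink (ez t₀ x₀ y z) (ey t₀ x₀ y z), mink (ez t₀ x₀ y z) (ez t₀ x₀ y z)]

open Real in
lemma ey_eq (t₀ x₀ y z : ℝ) : ey t₀ x₀ y z = ![0,0,1,0] := by
  funext i
  fin_cases i <;> simp [ey, Φemb]

open Real in
lemma hd_ez0 (t₀ z : ℝ) :
    HasDerivAt (fun s => t₀ - Real.log (Real.cosh s)) (-(Real.sinh z / Real.cosh z)) z := by
  have h := ((Real.hasDerivAt_cosh z).log (Real.cosh_pos z).ne').const_sub t₀
  simpa using h

open Real in
lemma ez_eq (t₀ x₀ y z : ℝ) : ez t₀ x₀ y z = ![-(Real.sinh z / Real.cosh z),0,0,1] := by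
  funext i
  fin_cases i <;> simp [ez, Φemb]
  exact ((Real.hasDerivAt_cosh z).log (Real.cosh_pos z).ne').deriv

open Real in
lemma dyy_eq (t₀ x₀ y z : ℝ) : dyy t₀ x₀ y z = ![0,0,0,0] := by
  funext i
  show deriv (fun s => ey t₀ x₀ s z i) y = ![0,0,0,0] i
  have h : (fun s => ey t₀ x₀ s z i) = fun _ => (![0,0,1,0] : Fin 4 → ℝ) i :=
    funext fun s => by rw [ey_eq]
  rw [h, deriv_const]
  fin_cases i <;> simp

open Real in
lemma dyz_eq (t₀ x₀ y z : ℝ) : dyz t₀ x₀ y z = ![0,0,0,0] := by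
  funext i
  show deriv (fun s => ey t₀ x₀ y s i) z = ![0,0,0,0] i
  have h : (fun s => ey t₀ x₀ y s i) = fun _ => (![0,0,1,0] : Fin 4 → ℝ) i :=
    funext fun s => by rw [ey_eq]
  rw [h, deriv_const]
  fin_cases i <;> simp

open Real in
lemma dzy_eq (t₀ x₀ y z : ℝ) : dzy t₀ x₀ y z = ![0,0,0,0] := by
  funext i
  show deriv (fun s => ez t₀ x₀ s z i) y = ![0,0,0,0] i
  have h : (fun s => ez t₀ x₀ s z i)
      = fun _ => (![-(Real.sinh z / Real.cosh z),0,0,1] : Fin 4 → ℝ) i :=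
    funext fun s => by rw [ez_eq]
  rw [h, deriv_const]
  fin_cases i <;> simp

open Real in
lemma dzz_eq (t₀ x₀ y z : ℝ) : dzz t₀ x₀ y z = ![-(1 / Real.cosh z ^ 2),0,0,0] := by
  have hd : HasDerivAt (fun s => -(Real.sinh s / Real.cosh s)) (-(1 / Real.cosh z ^ 2)) z := by
    have h := ((Real.hasDerivAt_sinh z).div (Real.hasDerivAt_cosh z) (Real.cosh_pos z).ne').neg
    have e : (Real.cosh z * Real.cosh z - Real.sinh z * Real.sinh z) / Real.cosh z ^ 2
        = 1 / Real.cosh z ^ 2 := by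
      rw [show Real.cosh z * Real.cosh z - Real.sinh z * Real.sinh z
          = Real.cosh z ^ 2 - Real.sinh z ^ 2 by ring, Real.cosh_sq_sub_sinh_sq]
    rwa [e] at h
  funext i
  show deriv (fun s => ez t₀ x₀ y s i) z = ![-(1 / Real.cosh z ^ 2),0,0,0] i
  have h : (fun s => ez t₀ x₀ y s i)
      = fun s => (![-(Real.sinh s / Real.cosh s),0,0,1] : Fin 4 → ℝ) i :=
    funext fun s => by rw [ez_eq]
  rw [h]
  fin_cases i
  · simpa using hd.deriv
  · simp
  · simp
  · simp

lemma cosh_sq_pos (z : ℝ) : 0 < Real.cosh z ^ 2 := pow_pos (Real.cosh_pos z) 2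

open Real in
lemma indMetric_eq (t₀ x₀ y z : ℝ) :
    indMetric t₀ x₀ y z = !![1, 0; 0, 1 / Real.cosh z ^ 2] := by
  ext i j
  fin_cases i <;> fin_cases j <;>
    simp [indMetric, mink, ey_eq, ez_eq]
  field_simp
  nlinarith [Real.cosh_sq_sub_sinh_sq z]

open Real in
lemma indMetric_diag (t₀ x₀ y z : ℝ) :
    indMetric t₀ x₀ y z = Matrix.diagonal ![1, 1 / Real.cosh z ^ 2] := by
  rw [indMetric_eq]
  ext i j
  fin_cases i <;> fin_cases j <;> simp [Matrix.diagonal]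

open Real in
lemma indMetric_inv (t₀ x₀ y z : ℝ) :
    (indMetric t₀ x₀ y z)⁻¹ = !![1, 0; 0, Real.cosh z ^ 2] := by
  apply Matrix.inv_eq_right_inv
  rw [indMetric_eq, Matrix.mul_fin_two, Matrix.one_fin_two]
  have h : 1 / Real.cosh z ^ 2 * Real.cosh z ^ 2 = 1 := by
    field_simp
  rw [h]
  norm_num

/-- The surface x = x₀, e^{t₀−t} = cosh z in Minkowski spacetime is
spacelike (its induced metric is positive definite), and at every point its mean
curvature vector H — the unique normal vector satisfying
g(n,H) = −γ^{AB} g(n, ∂_A∂_B Φ) for all normals n — is future-pointing timelike: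
g(H,H) < 0 and H⁰ > 0.  Thus the surface is future-trapped (and non-compact). -/
theorem hyperboloidal_surface_is_future_trapped (t₀ x₀ : ℝ) (y z : ℝ) :
    (indMetric t₀ x₀ y z).PosDef ∧
    ∃ H : Fin 4 → ℝ,
      mink H (ey t₀ x₀ y z) = 0 ∧
      mink H (ez t₀ x₀ y z) = 0 ∧
      (∀ nv : Fin 4 → ℝ, mink nv (ey t₀ x₀ y z) = 0 → mink nv (ez t₀ x₀ y z) = 0 →
        mink nv H = -((indMetric t₀ x₀ y z)⁻¹ 0 0 * mink nv (dyy t₀ x₀ y z)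
                    + (indMetric t₀ x₀ y z)⁻¹ 0 1 * mink nv (dyz t₀ x₀ y z)
                    + (indMetric t₀ x₀ y z)⁻¹ 1 0 * mink nv (dzy t₀ x₀ y z)
                    + (indMetric t₀ x₀ y z)⁻¹ 1 1 * mink nv (dzz t₀ x₀ y z))) ∧
      mink H H < 0 ∧ 0 < H 0 := by
  have hc := (Real.cosh_pos z).ne'
  have hc2 := (cosh_sq_pos z).ne'
  constructor
  · rw [indMetric_diag]
    rw [Matrix.posDef_diagonal_iff]
    intro i
    fin_cases i
    · norm_num
    · simpa using one_div_pos.mpr (cosh_sq_pos z)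
  · refine ⟨![Real.cosh z ^ 2, 0, 0, -(Real.sinh z * Real.cosh z)], ?_, ?_, ?_, ?_, ?_⟩
    · simp [mink, ey_eq]
    · simp only [mink, ez_eq]
      simp
      field_simp
      ring
    · intro nv h1 h2
      simp only [mink, ey_eq, ez_eq, Matrix.cons_val_zero, Matrix.cons_val_one,
        Matrix.head_cons] at h1 h2
      have h1' : nv 2 = 0 := by simpa using h1
      have h2' : nv 3 = -(nv 0 * (Real.sinh z / Real.cosh z)) := by
        simp at h2
        linarith
      rw [indMetric_inv, dyy_eq, dyz_eq, dzy_eq, dzz_eq]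
      simp only [mink, Matrix.cons_val_zero, Matrix.cons_val_one, Matrix.head_cons]
      simp [h1', h2']
      field_simp
      linear_combination (-nv 0) * Real.cosh_sq_sub_sinh_sq z
    · simp only [mink]
      simp
      nlinarith [Real.cosh_sq_sub_sinh_sq z, cosh_sq_pos z]
    · simp
      positivity
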